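/- arXiv:1303.3646 — 3 statements merged into one kernel-verified Lean document; each statement's English description precedes it below -/
import Mathlib

section
/- Let F be a field and let A, B ∈ SL₂(F), and suppose B has eigenvalue ε ∈ {±1} (so both eigenvalues of B equal ε). Then det(I - (A⊗B)·T) = (1 - ε·tr(A)·T + T²)². -/
open Polynomial Kronecker

private lemma my_det_fin_four {R : Type*} [CommRing R] (M : Matrix (Fin 4) (Fin 4) R) :
    M.det =
      M 0 0*M 1 1*M 2 2*M 3 3
      - M 0 0*M 1 1*M 2 3*M 3 2
      - M 0 0*M 1 2*M 2 1*M 3 3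
      + M 0 0*M 1 2*M 2 3*M 3 1
      + M 0 0*M 1 3*M 2 1*M 3 2
      - M 0 0*M 1 3*M 2 2*M 3 1
      - M 0 1*M 1 0*M 2 2*M 3 3
      + M 0 1*M 1 0*M 2 3*M 3 2
      + M 0 1*M 1 2*M 2 0*M 3 3
      - M 0 1*M 1 2*M 2 3*M 3 0
      - M 0 1*M 1 3*M 2 0*M 3 2
      + M 0 1*M 1 3*M 2 2*M 3 0
      + M 0 2*M 1 0*M 2 1*M 3 3
      - M 0 2*M 1 0*M 2 3*M 3 1
      - M 0 2*M 1 1*M 2 0*M 3 3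
      + M 0 2*M 1 1*M 2 3*M 3 0
      + M 0 2*M 1 3*M 2 0*M 3 1
      - M 0 2*M 1 3*M 2 1*M 3 0
      - M 0 3*M 1 0*M 2 1*M 3 2
      + M 0 3*M 1 0*M 2 2*M 3 1
      + M 0 3*M 1 1*M 2 0*M 3 2
      - M 0 3*M 1 1*M 2 2*M 3 0
      - M 0 3*M 1 2*M 2 0*M 3 1
      + M 0 3*M 1 2*M 2 1*M 3 0 := by
  rw [Matrix.det_succ_row_zero]
  simp [Fin.sum_univ_succ, Matrix.det_fin_three, show (Fin.succ 2 : Fin 4) = 3 from rfl,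
    show (Fin.succAbove (2 : Fin 4) 2) = 3 from rfl, show (Fin.succAbove (1 : Fin 4) 2) = 3 from rfl,
    show (Fin.castSucc (2 : Fin 3)) = (2 : Fin 4) from rfl, show (Fin.succAbove (3 : Fin 4) 2) = (2 : Fin 4) from rfl]
  ring

/-- If `A, B ∈ SL₂(F)` and `B` has eigenvalue `ε ∈ {±1}`, then
`det(I - (A⊗B)T) = (1 - ε·tr(A)·T + T²)²`. -/
theorem kronecker_det_of_pm_one_eigenvalue (F : Type*) [Field F]
    (A B : Matrix (Fin 2) (Fin 2) F) (hA : A.det = 1) (hB : B.det = 1)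
    (ε : F) (hε : ε = 1 ∨ ε = -1) (hroot : B.charpoly.IsRoot ε) :
    (1 - (Polynomial.X : Polynomial F) • (A ⊗ₖ B).map Polynomial.C).det
      = (1 - Polynomial.C (ε * A.trace) * Polynomial.X + Polynomial.X ^ 2) ^ 2 := by
  have hε2 : ε * ε = 1 := by rcases hε with rfl | rfl <;> ring
  have hA2 : A 0 0 * A 1 1 - A 0 1 * A 1 0 = 1 := by rw [← Matrix.det_fin_two]; exact hA
  have hB2 : B 0 0 * B 1 1 - B 0 1 * B 1 0 = 1 := by rw [← Matrix.det_fin_two]; exact hB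
  have hroot' : (ε - B 0 0) * (ε - B 1 1) - B 0 1 * B 1 0 = 0 := by
    have h := hroot
    rw [Matrix.charpoly, Matrix.det_fin_two] at h
    simpa [Matrix.charmatrix_apply_eq, Matrix.charmatrix_apply_ne, Polynomial.IsRoot] using h
  have htrB : B 0 0 + B 1 1 = 2 * ε := by
    linear_combination (-ε) * hroot' + ε * hB2 + (ε - B 0 0 - B 1 1) * hε2
  set a : Polynomial F := C (A 0 0) with ha
  set b : Polynomial F := C (A 0 1) with hb
  set c : Polynomial F := C (A 1 0) with hc
  set d : Polynomial F := C (A 1 1) with hd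
  set p : Polynomial F := C (B 0 0) with hp
  set q : Polynomial F := C (B 0 1) with hq
  set r : Polynomial F := C (B 1 0) with hr
  set s : Polynomial F := C (B 1 1) with hs
  set e : Polynomial F := C ε with he
  have hA4 : a * d - b * c = 1 := by
    rw [ha, hb, hc, hd, ← C_mul, ← C_mul, ← C_sub, hA2, C_1]
  have hB4 : p * s - q * r = 1 := by
    rw [hp, hq, hr, hs, ← C_mul, ← C_mul, ← C_sub, hB2, C_1]
  have htr : p + s = 2 * e := by
    rw [hp, hs, he, ← C_add, htrB, C_mul, map_ofNat]
  have heps : e * e = 1 := by rw [he, ← C_mul, hε2, C_1]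
  have htrA : A.trace = A 0 0 + A 1 1 := Matrix.trace_fin_two A
  rw [htrA]
  rw [show (1 - (Polynomial.X : Polynomial F) • (A ⊗ₖ B).map Polynomial.C).det
      = ((1 - (Polynomial.X : Polynomial F) • (A ⊗ₖ B).map Polynomial.C).submatrix
          (finProdFinEquiv (m := 2) (n := 2)).symm
          (finProdFinEquiv (m := 2) (n := 2)).symm).det from
    (Matrix.det_submatrix_equiv_self _ _).symm]
  rw [my_det_fin_four]
  simp only [Matrix.submatrix_apply, Matrix.sub_apply, Matrix.smul_apply, Matrix.one_apply,
    Matrix.map_apply, Matrix.kroneckerMap_apply, smul_eq_mul]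
  have e0 : (finProdFinEquiv (m := 2) (n := 2)).symm 0 = (0, 0) := rfl
  have e1 : (finProdFinEquiv (m := 2) (n := 2)).symm 1 = (0, 1) := rfl
  have e2 : (finProdFinEquiv (m := 2) (n := 2)).symm 2 = (1, 0) := rfl
  have e3 : (finProdFinEquiv (m := 2) (n := 2)).symm 3 = (1, 1) := rfl
  rw [e0, e1, e2, e3]
  norm_num [← ha, ← hb, ← hc, ← hd, ← hp, ← hq, ← hr, ← hs, ← he, ← C_mul, ← C_add, Prod.ext_iff, Fin.ext_iff]
  linear_combination
      ((-2)*X^2 + (1)*X^4 + (4)*e^2*X^2 + (-2)*d*e*X^3 + (-1)*b*c*X^4 + (-2)*a*e*X^3 + (1)*a*d*X^4) * hA4 +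
      ((1)*d^2*X^2 + (2)*b*c*X^2 + (1)*b*c*d*s*X^3 + (1)*b*c*d*p*X^3 + (1)*b^2*c^2*X^4 + (-1)*b^2*c^2*q*r*X^4 + (1)*b^2*c^2*p*s*X^4 + (-1)*a*d^2*s*X^3 + (-1)*a*d^2*p*X^3 + (1)*a*b*c*s*X^3 + (1)*a*b*c*p*X^3 + (-2)*a*b*c*d*X^4 + (2)*a*b*c*d*q*r*X^4 + (-2)*a*b*c*d*p*s*X^4 + (1)*a^2*X^2 + (-1)*a^2*d*s*X^3 + (-1)*a^2*d*p*X^3 + (1)*a^2*d^2*X^4 + (-1)*a^2*d^2*q*r*X^4 + (1)*a^2*d^2*p*s*X^4) * hB4 +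
      ((-1)*d*X + (-2)*b*c*e*X^2 + (-1)*b*c*s*X^2 + (-1)*b*c*p*X^2 + (1)*b*c*d*X^3 + (-1)*a*X + (2)*a*d*e*X^2 + (1)*a*d*s*X^2 + (1)*a*d*p*X^2 + (-1)*a*d^2*X^3 + (1)*a*b*c*X^3 + (-1)*a^2*d*X^3) * htr +
      ((4)*X^2 + (-1)*d^2*X^2 + (-2)*a*d*X^2 + (-1)*a^2*X^2) * heps
end

section
/- Let m be a positive integer such that for all sufficiently large primes ℓ, m divides lcm(4, ℓ-1) or m divides lcm(4, ℓ+1). Then m divides 12. -/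
/-- If `8` divides `lcm 4 x` then `8 ∣ x`. -/
lemma aux_eight_dvd_lcm {x : ℕ} (h : 8 ∣ Nat.lcm 4 x) : 8 ∣ x := by
  rcases eq_or_ne x 0 with rfl | hx
  · exact dvd_zero 8
  have h4 : (4 : ℕ) ≠ 0 := by norm_num
  have hfac := Nat.factorization_lcm h4 hx
  rw [show (8:ℕ) = 2 ^ 3 by norm_num] at h ⊢
  rw [Nat.Prime.pow_dvd_iff_le_factorization Nat.prime_two (Nat.lcm_ne_zero h4 hx), hfac,
    Finsupp.sup_apply] at h
  have h42 : (4:ℕ).factorization 2 = 2 := by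
    rw [show (4:ℕ) = 2 ^ 2 by norm_num, Nat.Prime.factorization_pow Nat.prime_two]
    simp
  rw [h42] at h
  rw [Nat.Prime.pow_dvd_iff_le_factorization Nat.prime_two hx]
  omega

lemma aux_coprime_dvd_lcm {p x : ℕ} (hp : Nat.Coprime p 4) (h : p ∣ Nat.lcm 4 x) :
    p ∣ x :=
  (Nat.Coprime.dvd_of_dvd_mul_left hp (h.trans (Nat.lcm_dvd_mul 4 x)))

/-- If a positive integer `m` divides `lcm(4, ℓ-1)` or `lcm(4, ℓ+1)` for all sufficiently
large primes `ℓ`, then `m` divides 12. -/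
theorem dvd_twelve_of_dvd_lcm (m : ℕ) (hm : 0 < m)
    (h : ∃ N : ℕ, ∀ ℓ : ℕ, N ≤ ℓ → ℓ.Prime →
      (m ∣ Nat.lcm 4 (ℓ - 1) ∨ m ∣ Nat.lcm 4 (ℓ + 1))) :
    m ∣ 12 := by
  obtain ⟨N, hN⟩ := h
  -- no 8
  have h8 : ¬ (8 ∣ m) := by
    intro h8
    have hu : IsUnit ((3 : ℕ) : ZMod 8) := by decide
    obtain ⟨ℓ, hℓN, hℓp, hℓmod⟩ := Nat.forall_exists_prime_gt_and_eq_mod hu N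
    rw [ZMod.natCast_eq_natCast_iff'] at hℓmod
    have hmod : ℓ % 8 = 3 := by simpa using hℓmod
    rcases hN ℓ hℓN.le hℓp with hc | hc
    · have := aux_eight_dvd_lcm (h8.trans hc)
      omega
    · have := aux_eight_dvd_lcm (h8.trans hc)
      omega
  -- no 9
  have h9 : ¬ (9 ∣ m) := by
    intro h9
    have hu : IsUnit ((4 : ℕ) : ZMod 9) := by decide
    obtain ⟨ℓ, hℓN, hℓp, hℓmod⟩ := Nat.forall_exists_prime_gt_and_eq_mod hu N
    rw [ZMod.natCast_eq_natCast_iff'] at hℓmod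
    have hmod : ℓ % 9 = 4 := by simpa using hℓmod
    have hcop : Nat.Coprime 9 4 := by decide
    rcases hN ℓ hℓN.le hℓp with hc | hc
    · have := aux_coprime_dvd_lcm hcop (h9.trans hc)
      omega
    · have := aux_coprime_dvd_lcm hcop (h9.trans hc)
      omega
  -- no prime ≥ 5
  have hbig : ∀ p : ℕ, p.Prime → 5 ≤ p → ¬ (p ∣ m) := by
    intro p hp hp5 hpm
    haveI : NeZero p := ⟨hp.pos.ne'⟩
    haveI : Fact p.Prime := ⟨hp⟩
    have hu : IsUnit ((2 : ℕ) : ZMod p) := by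
      rw [ZMod.isUnit_iff_coprime]
      exact (Nat.coprime_primes Nat.prime_two hp).mpr (by omega)
    obtain ⟨ℓ, hℓN, hℓp, hℓmod⟩ := Nat.forall_exists_prime_gt_and_eq_mod hu N
    have hcop : Nat.Coprime p 4 := by
      rw [Nat.Prime.coprime_iff_not_dvd hp]
      intro hd
      have := Nat.le_of_dvd (by norm_num) hd
      omega
    have hℓ2 : 2 ≤ ℓ := hℓp.two_le
    rcases hN ℓ hℓN.le hℓp with hc | hc
    · have hd : p ∣ ℓ - 1 := aux_coprime_dvd_lcm hcop (hpm.trans hc)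
      rw [← ZMod.natCast_eq_zero_iff] at hd
      rw [Nat.cast_sub (by omega), hℓmod] at hd
      have : ((1:ℕ) : ZMod p) = 0 := by push_cast at hd ⊢; linear_combination hd
      rw [ZMod.natCast_eq_zero_iff] at this
      have := Nat.le_of_dvd one_pos this
      omega
    · have hd : p ∣ ℓ + 1 := aux_coprime_dvd_lcm hcop (hpm.trans hc)
      rw [← ZMod.natCast_eq_zero_iff] at hd
      rw [Nat.cast_add, hℓmod] at hd
      have : ((3:ℕ) : ZMod p) = 0 := by push_cast at hd ⊢; linear_combination hd
      rw [ZMod.natCast_eq_zero_iff] at this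
      have := Nat.le_of_dvd (by norm_num) this
      omega
  -- conclude
  rw [← Nat.factorization_le_iff_dvd hm.ne' (by norm_num)]
  intro p
  by_cases hp : p.Prime
  · rcases lt_or_ge p 5 with hlt | hge
    · interval_cases p
      · exact absurd hp (by decide)
      · exact absurd hp (by decide)
      · -- p = 2
        have hle : m.factorization 2 ≤ 2 := by
          by_contra hgt
          exact h8 (by
            rw [show (8:ℕ) = 2 ^ 3 by norm_num]
            exact (Nat.Prime.pow_dvd_iff_le_factorization Nat.prime_two hm.ne').mpr (by omega))
        have hge' : 2 ≤ (12:ℕ).factorization 2 :=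
          (Nat.Prime.pow_dvd_iff_le_factorization Nat.prime_two (by norm_num)).mp (by norm_num)
        omega
      · -- p = 3
        have hle : m.factorization 3 ≤ 1 := by
          by_contra hgt
          exact h9 (by
            rw [show (9:ℕ) = 3 ^ 2 by norm_num]
            exact (Nat.Prime.pow_dvd_iff_le_factorization Nat.prime_three hm.ne').mpr (by omega))
        have hge' : 1 ≤ (12:ℕ).factorization 3 :=
          (Nat.Prime.pow_dvd_iff_le_factorization Nat.prime_three (by norm_num)).mp (by norm_num)
        omega
      · exact absurd hp (by decide)
    · have : m.factorization p = 0 := by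
        by_contra hne
        exact hbig p hp hge ((Nat.Prime.dvd_iff_one_le_factorization hp hm.ne').mpr (by omega))
      simp [this]
  · simp [Nat.factorization_eq_zero_of_not_prime _ hp]
end

section
/- Let ℓ ≥ 5 be a prime and let G be a subgroup of SL₂(𝔽_ℓ) that admits a surjective group homomorphism onto PSL₂(𝔽_ℓ). Then G = SL₂(𝔽_ℓ). -/
open Matrix

section Aux

variable (ℓ : ℕ) [Fact ℓ.Prime]

/-- Upper unipotent element of `SL₂`. -/
private def EE (t : ZMod ℓ) : Matrix.SpecialLinearGroup (Fin 2) (ZMod ℓ) :=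
  ⟨Matrix.transvection 0 1 t, Matrix.det_transvection_of_ne 0 1 (by decide) t⟩

/-- Lower unipotent element of `SL₂`. -/
private def FF (t : ZMod ℓ) : Matrix.SpecialLinearGroup (Fin 2) (ZMod ℓ) :=
  ⟨Matrix.transvection 1 0 t, Matrix.det_transvection_of_ne 1 0 (by decide) t⟩

private lemma EE_mul (t s : ZMod ℓ) : EE ℓ t * EE ℓ s = EE ℓ (t + s) :=
  Subtype.ext (Matrix.transvection_mul_transvection_same 0 1 (by decide) t s)

private lemma FF_mul (t s : ZMod ℓ) : FF ℓ t * FF ℓ s = FF ℓ (t + s) :=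
  Subtype.ext (Matrix.transvection_mul_transvection_same 1 0 (by decide) t s)

private lemma transvection01_eq (t : ZMod ℓ) :
    Matrix.transvection (0 : Fin 2) 1 t = !![1, t; 0, 1] := by
  ext i j
  fin_cases i <;> fin_cases j <;>
    simp [Matrix.transvection, Matrix.single, Matrix.one_apply]

private lemma transvection10_eq (t : ZMod ℓ) :
    Matrix.transvection (1 : Fin 2) 0 t = !![1, 0; t, 1] := by
  ext i j
  fin_cases i <;> fin_cases j <;>
    simp [Matrix.transvection, Matrix.single, Matrix.one_apply]

/-- If a subgroup contains all elementary unipotent matrices, it is everything. -/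
private lemma mem_of_transvections
    (G : Subgroup (Matrix.SpecialLinearGroup (Fin 2) (ZMod ℓ)))
    (hE : ∀ t, EE ℓ t ∈ G) (hF : ∀ t, FF ℓ t ∈ G)
    (g : Matrix.SpecialLinearGroup (Fin 2) (ZMod ℓ)) : g ∈ G := by
  -- every list of transvections gives an element of G
  have hlist : ∀ L : List (Matrix.TransvectionStruct (Fin 2) (ZMod ℓ)),
      ∃ s : Matrix.SpecialLinearGroup (Fin 2) (ZMod ℓ), s ∈ G ∧
        (s : Matrix (Fin 2) (Fin 2) (ZMod ℓ)) =
          (L.map Matrix.TransvectionStruct.toMatrix).prod := by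
    intro L
    induction L with
    | nil => exact ⟨1, G.one_mem, by simp⟩
    | cons t L IH =>
      obtain ⟨s, hsG, hs⟩ := IH
      obtain ⟨i, j, hij, c⟩ := t
      fin_cases i <;> fin_cases j
      · exact absurd rfl hij
      · exact ⟨EE ℓ c * s, G.mul_mem (hE c) hsG, by
          rw [Matrix.SpecialLinearGroup.coe_mul, hs]; rfl⟩
      · exact ⟨FF ℓ c * s, G.mul_mem (hF c) hsG, by
          rw [Matrix.SpecialLinearGroup.coe_mul, hs]; rfl⟩
      · exact absurd rfl hij
  obtain ⟨L, L', D, hD⟩ :=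
    Matrix.Pivot.exists_list_transvec_mul_diagonal_mul_list_transvec
      (g : Matrix (Fin 2) (Fin 2) (ZMod ℓ))
  obtain ⟨s₁, hs₁G, hs₁⟩ := hlist L
  obtain ⟨s₂, hs₂G, hs₂⟩ := hlist L'
  -- the diagonal matrix has determinant 1
  have hdet : D 0 * D 1 = 1 := by
    have h1 : Matrix.det (g : Matrix (Fin 2) (Fin 2) (ZMod ℓ)) = 1 := g.2
    rw [hD, Matrix.det_mul, Matrix.det_mul, ← hs₁, ← hs₂, s₁.2, s₂.2,
      Matrix.det_diagonal, Fin.prod_univ_two] at h1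
    simpa using h1
  set a : ZMod ℓ := D 0 with ha
  have ha0 : a ≠ 0 := left_ne_zero_of_mul_eq_one hdet
  have hD1 : D 1 = a⁻¹ := (inv_eq_of_mul_eq_one_right hdet).symm
  -- the diagonal element of SL₂, as a product of transvections
  set w : Matrix.SpecialLinearGroup (Fin 2) (ZMod ℓ) :=
    EE ℓ a * FF ℓ (-a⁻¹) * EE ℓ a with hw
  set w1 : Matrix.SpecialLinearGroup (Fin 2) (ZMod ℓ) :=
    EE ℓ (-1) * FF ℓ 1 * EE ℓ (-1) with hw1
  have hwG : w ∈ G := G.mul_mem (G.mul_mem (hE a) (hF (-a⁻¹))) (hE a)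
  have hw1G : w1 ∈ G := G.mul_mem (G.mul_mem (hE (-1)) (hF 1)) (hE (-1))
  have hwval : (w : Matrix (Fin 2) (Fin 2) (ZMod ℓ)) = !![0, a; -a⁻¹, 0] := by
    rw [hw, Matrix.SpecialLinearGroup.coe_mul, Matrix.SpecialLinearGroup.coe_mul]
    simp only [EE, FF, Matrix.SpecialLinearGroup.coe_mk,
      transvection01_eq, transvection10_eq]
    rw [Matrix.mul_fin_two, Matrix.mul_fin_two]
    congr 1
    field_simp
    simp [neg_div]
  have hw1val : (w1 : Matrix (Fin 2) (Fin 2) (ZMod ℓ)) = !![0, -1; 1, 0] := by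
    rw [hw1, Matrix.SpecialLinearGroup.coe_mul, Matrix.SpecialLinearGroup.coe_mul]
    simp only [EE, FF, Matrix.SpecialLinearGroup.coe_mk,
      transvection01_eq, transvection10_eq]
    rw [Matrix.mul_fin_two, Matrix.mul_fin_two]
    norm_num
  have hdiag : ((w * w1 : _) : Matrix (Fin 2) (Fin 2) (ZMod ℓ)) = Matrix.diagonal D := by
    rw [Matrix.SpecialLinearGroup.coe_mul, hwval, hw1val, Matrix.mul_fin_two]
    ext i j
    fin_cases i <;> fin_cases j <;> simp [Matrix.diagonal, ← ha, hD1]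
  have hg : g = s₁ * (w * w1) * s₂ := by
    apply Subtype.ext
    rw [Matrix.SpecialLinearGroup.coe_mul, Matrix.SpecialLinearGroup.coe_mul,
      hdiag, hs₁, hs₂, hD]
  rw [hg]
  exact G.mul_mem (G.mul_mem hs₁G (G.mul_mem hwG hw1G)) hs₂G

end Aux

/-- If a subgroup `G` of `SL₂(𝔽_ℓ)` (`ℓ ≥ 5` prime) surjects onto `PSL₂(𝔽_ℓ)`, then
`G = SL₂(𝔽_ℓ)`. -/
theorem subgroup_eq_top_of_surjective_onto_psl (ℓ : ℕ) [Fact ℓ.Prime] (hℓ : 5 ≤ ℓ)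
    (G : Subgroup (Matrix.SpecialLinearGroup (Fin 2) (ZMod ℓ)))
    (f : G →* (Matrix.SpecialLinearGroup (Fin 2) (ZMod ℓ) ⧸
          Subgroup.center (Matrix.SpecialLinearGroup (Fin 2) (ZMod ℓ))))
    (hf : Function.Surjective f) :
    G = ⊤ := by
  set S := Matrix.SpecialLinearGroup (Fin 2) (ZMod ℓ)
  set Z := Subgroup.center S
  -- the center has at most 2 elements
  have hZ : Nat.card Z ≤ 2 := by
    have e := Matrix.SpecialLinearGroup.center_equiv_rootsOfUnity' (R := ZMod ℓ) (0 : Fin 2)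
    rw [Nat.card_congr e.toEquiv]
    simpa using card_rootsOfUnity (ZMod ℓ) (Fintype.card (Fin 2))
  -- |G| ≥ |PSL₂|
  have hcard : Nat.card (S ⧸ Z) ≤ Nat.card G := Nat.card_le_card_of_surjective f hf
  have hGpos : 0 < Nat.card G := Nat.card_pos
  -- |S| = |Z| * |PSL₂| ≤ 2 * |G|
  have hS : Nat.card G * G.index = Nat.card S := Subgroup.card_mul_index G
  have hS' : Nat.card Z * Z.index = Nat.card S := Subgroup.card_mul_index Z
  have hZindex : Z.index = Nat.card (S ⧸ Z) := rfl
  have hle : Nat.card G * G.index ≤ Nat.card G * 2 := by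
    calc Nat.card G * G.index = Nat.card S := hS
      _ = Nat.card Z * Nat.card (S ⧸ Z) := by rw [← hS', hZindex]
      _ ≤ 2 * Nat.card G := Nat.mul_le_mul hZ hcard
      _ = Nat.card G * 2 := Nat.mul_comm _ _
  have hidx : G.index ≤ 2 := Nat.le_of_mul_le_mul_left hle hGpos
  have hidx0 : G.index ≠ 0 := by
    intro h
    rw [h, Nat.mul_zero] at hS
    exact (Nat.card_pos (α := S)).ne' hS.symm
  have hcases : G.index = 1 ∨ G.index = 2 := by omega
  rcases hcases with h | h
  · exact Subgroup.index_eq_one.mp h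
  · -- index 2: all squares are in G, and transvections are squares since ℓ is odd
    have h2 : (2 : ZMod ℓ) ≠ 0 := by
      have hnd : ¬ (ℓ ∣ 2) := fun hdvd => absurd (Nat.le_of_dvd two_pos hdvd) (by omega)
      intro hc
      apply hnd
      have : ((2 : ℕ) : ZMod ℓ) = 0 := by exact_mod_cast hc
      exact (ZMod.natCast_eq_zero_iff 2 ℓ).mp this
    have hhalf : ∀ t : ZMod ℓ, t / 2 + t / 2 = t := by
      intro t; field_simp; ring
    have hE : ∀ t, EE ℓ t ∈ G := fun t => by
      have := Subgroup.mul_self_mem_of_index_two h (EE ℓ (t / 2))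
      rwa [EE_mul, hhalf] at this
    have hF : ∀ t, FF ℓ t ∈ G := fun t => by
      have := Subgroup.mul_self_mem_of_index_two h (FF ℓ (t / 2))
      rwa [FF_mul, hhalf] at this
    exact (Subgroup.eq_top_iff' G).mpr (mem_of_transvections ℓ G hE hF)
end
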